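/- Let R be a finite commutative chain ring of order 2^a with residue field 𝔽₂ and maximal ideal ⟨s⟩ of nilpotency index t, and G a cyclic group of odd order n. For the primitive idempotent e = \widehat{G}, the cyclic code C = ⟨s^k e⟩ in R[G] (0 ≤ k ≤ t) has exactly 2^{t-k} elements, and every nonzero element of C has weight |G| (full support), so the minimum weight of C is |G|. -/

import Mathlib

open IsLocalRing

/-- In a ring whose residue field has two elements, every element is in the
maximal ideal or is `1` plus an element of the maximal ideal. -/
lemma aux_residue_two (R : Type*) [CommRing R] [IsLocalRing R]
    (hres : Nat.card (R ⧸ IsLocalRing.maximalIdeal R) = 2) (r : R) :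
    r ∈ maximalIdeal R ∨ r - 1 ∈ maximalIdeal R := by
  obtain ⟨x, y, hxy, hcov⟩ := Nat.card_eq_two_iff.mp hres
  haveI : Nontrivial (R ⧸ maximalIdeal R) :=
    Ideal.Quotient.nontrivial_iff.mpr (Ideal.IsMaximal.ne_top inferInstance)
  have hall : ∀ z : R ⧸ maximalIdeal R, z = x ∨ z = y := by
    intro z
    have hz : z ∈ ({x, y} : Set (R ⧸ maximalIdeal R)) := by rw [hcov]; trivial
    simpa using hz
  have h0 := hall 0
  have h1 := hall 1
  have hq := hall (Ideal.Quotient.mk (maximalIdeal R) r)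
  have h01 : (0 : R ⧸ maximalIdeal R) ≠ 1 := zero_ne_one
  have key : Ideal.Quotient.mk (maximalIdeal R) r = 0 ∨
      Ideal.Quotient.mk (maximalIdeal R) r = 1 := by
    rcases h0 with h0 | h0 <;> rcases h1 with h1 | h1 <;> rcases hq with hq | hq <;> simp_all
  rcases key with h | h
  · left; exact (Ideal.Quotient.eq_zero_iff_mem).mp h
  · right
    have h' : Ideal.Quotient.mk (maximalIdeal R) r = Ideal.Quotient.mk (maximalIdeal R) 1 := by
      rw [map_one]; exact h
    exact (Ideal.Quotient.mk_eq_mk_iff_sub_mem r 1).mp h'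

/-- Cardinality of the ideals `(s^j)` in a finite chain ring with residue field `𝔽₂`. -/
lemma aux_card_span_pow (R : Type*) [CommRing R] [Finite R] [IsLocalRing R]
    (hres : Nat.card (R ⧸ IsLocalRing.maximalIdeal R) = 2)
    (s : R) (hM : IsLocalRing.maximalIdeal R = Ideal.span {s})
    (t : ℕ) (hst : s ^ t = 0) (hst' : s ^ (t - 1) ≠ 0) :
    ∀ d j, j + d = t → Nat.card (Ideal.span {s ^ j} : Ideal R) = 2 ^ d := by
  intro d
  induction d with
  | zero =>
    intro j hj
    have hjt : j = t := by omega
    subst hjt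
    rw [hst]
    have hbot : (Ideal.span {(0 : R)} : Ideal R) = ⊥ := by simp
    rw [hbot, pow_zero]
    rw [Nat.card_eq_one_iff_unique]
    refine ⟨⟨fun x y => Subtype.ext ?_⟩, ⟨0⟩⟩
    have hx := x.2; have hy := y.2
    simp only [Ideal.mem_bot] at hx hy
    rw [hx, hy]
  | succ d ih =>
    intro j hj
    have hj1 : (j + 1) + d = t := by omega
    have hjt : j < t := by omega
    -- s^j is not in the smaller ideal
    have hnot : s ^ j ∉ Ideal.span {s ^ (j + 1)} := by
      intro h
      rw [Ideal.mem_span_singleton] at h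
      obtain ⟨x, hx⟩ := h
      have hsx : s * x ∈ maximalIdeal R := by
        rw [hM, Ideal.mem_span_singleton]
        exact ⟨x, rfl⟩
      have hv : IsUnit (1 - s * x) :=
        IsLocalRing.isUnit_one_sub_self_of_mem_nonunits _
          ((IsLocalRing.mem_maximalIdeal _).mp hsx)
      have hz : s ^ j * (1 - s * x) = 0 := by
        have : s ^ j * (1 - s * x) = s ^ j - s ^ (j + 1) * x := by ring
        rw [this, ← hx, sub_self]
      have hsj : s ^ j = 0 := by
        obtain ⟨v, hv⟩ := hv.exists_right_inv
        calc s ^ j = s ^ j * ((1 - s * x) * v) := by rw [hv, mul_one]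
          _ = (s ^ j * (1 - s * x)) * v := by ring
          _ = 0 := by rw [hz, zero_mul]
      apply hst'
      have : s ^ (t - 1) = s ^ j * s ^ (t - 1 - j) := by
        rw [← pow_add]; congr 1; omega
      rw [this, hsj, zero_mul]
    have hle : Ideal.span {s ^ (j + 1)} ≤ Ideal.span {s ^ j} := by
      rw [Ideal.span_le, Set.singleton_subset_iff, SetLike.mem_coe,
        Ideal.mem_span_singleton]
      exact pow_dvd_pow s (by omega)
    classical
    let f : Bool × (Ideal.span {s ^ (j + 1)} : Ideal R) →
        (Ideal.span {s ^ j} : Ideal R) :=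
      fun p => ⟨(cond p.1 (s ^ j) 0) + (p.2 : R), by
        refine Ideal.add_mem _ ?_ (hle p.2.2)
        cases p.1
        · exact zero_mem _
        · exact Ideal.subset_span rfl⟩
    have hfbij : Function.Bijective f := by
      constructor
      · rintro ⟨b, y⟩ ⟨b', y'⟩ hfe
        have hfe' : (cond b (s ^ j) 0) + (y : R)
            = (cond b' (s ^ j) 0) + (y' : R) := congrArg Subtype.val hfe
        cases b <;> cases b' <;>
          simp only [cond_true, cond_false, zero_add] at hfe'
        · exact Prod.ext rfl (Subtype.ext hfe')
        · exfalso; apply hnot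
          have hd : s ^ j = (y : R) - (y' : R) := by linear_combination -hfe'
          rw [hd]; exact sub_mem y.2 y'.2
        · exfalso; apply hnot
          have hd : s ^ j = (y' : R) - (y : R) := by linear_combination hfe'
          rw [hd]; exact sub_mem y'.2 y.2
        · have hd : (y : R) = (y' : R) := by linear_combination hfe'
          exact Prod.ext rfl (Subtype.ext hd)
      · rintro ⟨x, hx⟩
        obtain ⟨c, hc⟩ := Ideal.mem_span_singleton.mp hx
        rcases aux_residue_two R hres c with hcm | hcm
        · rw [hM, Ideal.mem_span_singleton] at hcm
          obtain ⟨w, hw⟩ := hcm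
          refine ⟨⟨false, ⟨x, ?_⟩⟩, ?_⟩
          · rw [Ideal.mem_span_singleton]
            exact ⟨w, by rw [hc, hw]; ring⟩
          · apply Subtype.ext
            show (cond false (s ^ j) 0) + x = x
            simp
        · rw [hM, Ideal.mem_span_singleton] at hcm
          obtain ⟨w, hw⟩ := hcm
          refine ⟨⟨true, ⟨x - s ^ j, ?_⟩⟩, ?_⟩
          · rw [Ideal.mem_span_singleton]
            refine ⟨w, ?_⟩
            have : x - s ^ j = s ^ j * (c - 1) := by rw [hc]; ring
            rw [this, hw]; ring
          · apply Subtype.ext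
            show (cond true (s ^ j) 0) + (x - s ^ j) = x
            simp
    have := Nat.card_eq_of_bijective f hfbij
    rw [Nat.card_prod, Nat.card_eq_two_iff.mpr ⟨false, true, by simp, by
      ext b; cases b <;> simp⟩, ih (j + 1) hj1] at this
    rw [← this]
    ring

/-- An odd natural number is invertible in a finite ring of order `2^a`. -/
lemma aux_odd_unit (R : Type*) [CommRing R] [Finite R] (a : ℕ)
    (hcard : Nat.card R = 2 ^ a) (n : ℕ) (hn : Odd n) : IsUnit ((n : ℕ) : R) := by
  haveI : Fintype R := Fintype.ofFinite R
  have h2a : ((2 ^ a : ℕ) : R) = 0 := by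
    rw [← hcard, Nat.card_eq_fintype_card]
    exact Nat.cast_card_eq_zero R
  have hdvd : ringChar R ∣ 2 ^ a := ringChar.dvd h2a
  have hnd : ¬ 2 ∣ n := by
    obtain ⟨m, hm⟩ := hn; omega
  have hco : Nat.Coprime n (2 ^ a) :=
    Nat.Coprime.pow_right a ((Nat.prime_two.coprime_iff_not_dvd.mpr hnd).symm)
  have hu : IsUnit ((n : ℕ) : ZMod (2 ^ a)) :=
    ⟨ZMod.unitOfCoprime n hco, ZMod.coe_unitOfCoprime n hco⟩
  have := hu.map (ZMod.castHom hdvd R)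
  simpa using this

theorem code_of_hat_G
    (R : Type*) [CommRing R] [Finite R] [IsLocalRing R]
    (hchain : ∀ I J : Ideal R, I ≤ J ∨ J ≤ I)
    (a : ℕ) (hcard : Nat.card R = 2 ^ a)
    (hres : Nat.card (R ⧸ IsLocalRing.maximalIdeal R) = 2)
    (s : R) (hM : IsLocalRing.maximalIdeal R = Ideal.span {s})
    (t : ℕ) (ht : 1 ≤ t) (hst : s ^ t = 0) (hst' : s ^ (t - 1) ≠ 0)
    (G : Type*) [CommGroup G] [Fintype G] [IsCyclic G] (hodd : Odd (Fintype.card G))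
    (k : ℕ) (hk : k ≤ t) :
    let e : MonoidAlgebra R G :=
      Ring.inverse ((Fintype.card G : R)) • ∑ g : G, MonoidAlgebra.single g (1 : R)
    let C : Ideal (MonoidAlgebra R G) := Ideal.span {s ^ k • e}
    Nat.card C = 2 ^ (t - k) ∧
      ∀ α ∈ C, α ≠ 0 → (α : MonoidAlgebra R G).coeff.support.card = Fintype.card G := by
  intro e C
  classical
  set n : ℕ := Fintype.card G with hn
  have hu : IsUnit ((n : ℕ) : R) := aux_odd_unit R a hcard n hodd
  set u : R := Ring.inverse ((n : ℕ) : R) with hudef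
  have hun : ((n : ℕ) : R) * u = 1 := Ring.mul_inverse_cancel _ hu
  set T : MonoidAlgebra R G := ∑ g : G, MonoidAlgebra.single g (1 : R) with hT
  have he : e = u • T := rfl
  -- coefficients of T
  have hTapp : ∀ g0 : G, T.coeff g0 = 1 := by
    intro g0
    rw [hT, MonoidAlgebra.coeff_sum, Finset.sum_apply']
    simp [MonoidAlgebra.coeff_single, Finsupp.single_apply]
  -- key multiplication fact : β * T = (∑ β g) • T
  have hmulT : ∀ β : MonoidAlgebra R G, β * T = (∑ g : G, β.coeff g) • T := by
    intro β
    ext x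
    rw [hT, Finset.mul_sum, MonoidAlgebra.coeff_sum, Finset.sum_apply']
    have lhs : ∀ g : G, (β * MonoidAlgebra.single g (1 : R)).coeff x = β.coeff (x * g⁻¹) := by
      intro g
      rw [MonoidAlgebra.coeff_mul_single_apply, mul_one]
    rw [Finset.sum_congr rfl (fun g _ => lhs g)]
    have : ((∑ g : G, β.coeff g) • T).coeff x = ∑ g : G, β.coeff g := by
      rw [MonoidAlgebra.coeff_smul_apply, hTapp, smul_eq_mul, mul_one]
    rw [← hT, this]
    exact Fintype.sum_equiv ((Equiv.inv G).trans (Equiv.mulLeft x))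
      (fun g => β.coeff (x * g⁻¹)) β.coeff (fun g => rfl)
  have hee : ∀ r : R, r • e = (r * u) • T := by
    intro r; rw [he, smul_smul]
  -- injectivity of r ↦ r • e
  have hinj : ∀ r r' : R, r • e = r' • e → r = r' := by
    intro r r' h
    rw [hee, hee] at h
    have h1 : r * u = r' * u := by
      have happ : ((r * u) • T).coeff (1 : G) = ((r' * u) • T).coeff (1 : G) := by rw [h]
      rwa [MonoidAlgebra.coeff_smul_apply, MonoidAlgebra.coeff_smul_apply, hTapp, smul_eq_mul, mul_one,
        smul_eq_mul, mul_one] at happ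
    calc r = r * (u * ((n : ℕ) : R)) := by rw [mul_comm u, hun, mul_one]
      _ = (r * u) * ((n : ℕ) : R) := by ring
      _ = (r' * u) * ((n : ℕ) : R) := by rw [h1]
      _ = r' := by rw [mul_assoc, mul_comm u, hun, mul_one]
  -- membership characterization
  have hCmem : ∀ x, x ∈ C ↔ ∃ r ∈ Ideal.span {s ^ k}, x = r • e := by
    intro x
    constructor
    · intro hx
      obtain ⟨β, hβ⟩ := Ideal.mem_span_singleton'.mp hx
      refine ⟨s ^ k * ∑ g : G, β.coeff g, Ideal.mem_span_singleton.mpr ⟨_, rfl⟩, ?_⟩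
      rw [← hβ, he]
      calc β * (s ^ k • u • T) = (s ^ k * u) • (β * T) := by
            rw [smul_smul, mul_smul_comm]
        _ = (s ^ k * u) • ((∑ g : G, β.coeff g) • T) := by rw [hmulT]
        _ = ((s ^ k * ∑ g : G, β.coeff g) * u) • T := by rw [smul_smul]; ring_nf
        _ = (s ^ k * ∑ g : G, β.coeff g) • (u • T) := by rw [smul_smul]
    · rintro ⟨r, hr, rfl⟩
      obtain ⟨c, hc⟩ := Ideal.mem_span_singleton.mp hr
      have hre : c • (s ^ k • e) = r • e := by
        rw [smul_smul c (s ^ k) e, hc, mul_comm c (s ^ k)]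
      rw [← hre]
      exact Submodule.smul_of_tower_mem C c (Ideal.subset_span rfl)
  -- the bijection with the ideal (s^k)
  have hcardC : Nat.card C = Nat.card (Ideal.span {s ^ k} : Ideal R) := by
    refine (Nat.card_eq_of_bijective
      (fun r : (Ideal.span {s ^ k} : Ideal R) =>
        (⟨(r : R) • e, (hCmem _).mpr ⟨r, r.2, rfl⟩⟩ : C)) ⟨?_, ?_⟩).symm
    · rintro ⟨r, hr⟩ ⟨r', hr'⟩ hre
      exact Subtype.ext (hinj r r' (congrArg Subtype.val hre))
    · rintro ⟨x, hx⟩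
      obtain ⟨r, hr, hxe⟩ := (hCmem x).mp hx
      exact ⟨⟨r, hr⟩, Subtype.ext hxe.symm⟩
  constructor
  · rw [hcardC]
    exact aux_card_span_pow R hres s hM t hst hst' (t - k) k (by omega)
  · intro α hα hne
    obtain ⟨r, hr, rfl⟩ := (hCmem α).mp hα
    have hru : r * u ≠ 0 := by
      intro h
      exact hne (by rw [hee, h, zero_smul])
    have happ : ∀ g : G, (r • e).coeff g = r * u := by
      intro g
      rw [hee, MonoidAlgebra.coeff_smul_apply, hTapp, smul_eq_mul, mul_one]
    have hsupp : (r • e).coeff.support = Finset.univ :=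
      Finset.eq_univ_of_forall fun g => Finsupp.mem_support_iff.mpr (by
        rw [happ g]; exact hru)
    rw [hsupp, Finset.card_univ]
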